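/- Renormalization operations commute: for two distinct depth-d vertices w₁ and w₂ to be refuted, if there is a third depth-d vertex w with h(w) > 0 distinct from both, then renormalizing with respect to w₁ then w₂ yields the same weight function as renormalizing with respect to w₂ then w₁. -/

import Mathlib

/-- An abstract rooted tree: every vertex has a parent (the root is its own
parent), a depth (distance to the root), every vertex is connected to the
root, and each depth level is finite (finitely-branching). -/
structure RTree (V : Type) where
  root : V
  parent : V → V
  depth : V → ℕ
  parent_root : parent root = root
  depth_root : depth root = 0
  depth_parent : ∀ v : V, v ≠ root → depth (parent v) + 1 = depth v
  ancestor_root : ∀ v : V, parent^[depth v] v = root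
  level_finite : ∀ d : ℕ, {v : V | depth v = d}.Finite

namespace RTree

variable {V : Type}

/-- The children of a vertex. -/
def children (T : RTree V) (v : V) : Set V :=
  {u : V | T.parent u = v ∧ u ≠ T.root}

/-- The descendants of `v` that lie `e` levels below `v`. -/
def descAt (T : RTree V) (e : ℕ) (v : V) : Set V :=
  {u : V | T.parent^[e] u = v ∧ T.depth u = T.depth v + e}

end RTree

/-- A coherent weight function (a Hintikka tree): the root gets weight 1 and
the weight of each vertex is the sum of the weights of its children. -/
def Coherent {V : Type} (T : RTree V) (h : V → ℝ) : Prop :=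
  h T.root = 1 ∧ ∀ v : V, h v = ∑ᶠ u ∈ T.children v, h u
open scoped Classical

/-- `u` is an ancestor of (or equal to) `v`. -/
def AncOrEq {V : Type} (T : RTree V) (u v : V) : Prop :=
  ∃ k : ℕ, T.parent^[k] v = u ∧ T.depth v = T.depth u + k

/-- `u` is a proper descendant of `ρ`. -/
def ProperDesc {V : Type} (T : RTree V) (ρ u : V) : Prop :=
  ∃ j : ℕ, 0 < j ∧ T.parent^[j] u = ρ ∧ T.depth u = T.depth ρ + j

/-- `u` is supported (relative to weights `h`, target depth `D`, and the
refuted depth-`D` vertex `w`): there is a chain from `u` down to some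
depth-`D` vertex `v ≠ w` along which `h` is positive (for vertices deeper
than `D`, we require the ancestor at depth `D` to avoid `w` and to carry
positive weight). -/
def Supported {V : Type} (T : RTree V) (h : V → ℝ) (D : ℕ) (w : V) (u : V) : Prop :=
  if T.depth u ≤ D then
    ∃ v : V, T.depth v = D ∧ v ≠ w ∧ T.parent^[D - T.depth u] v = u ∧
      ∀ k : ℕ, k ≤ D - T.depth u → 0 < h (T.parent^[k] v)
  else
    T.parent^[T.depth u - D] u ≠ w ∧ 0 < h (T.parent^[T.depth u - D] u)

/-- The total renormalization constant: sum of `h` over the children of `ρ`. -/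
noncomputable def Ztot {V : Type} (T : RTree V) (h : V → ℝ) (ρ : V) : ℝ :=
  ∑ᶠ u ∈ T.children ρ, h u

/-- The positive renormalization constant: sum of `h` over the supported
children of `ρ`. -/
noncomputable def Zplus {V : Type} (T : RTree V) (h : V → ℝ) (D : ℕ) (w ρ : V) : ℝ :=
  ∑ᶠ u ∈ T.children ρ ∩ {u : V | Supported T h D w u}, h u

/-- Renormalization of `h` refuting the depth-`D` vertex `w`, with
redistribution point `ρ`: zero the unsupported descendants of `ρ`, rescale
the supported descendants of `ρ` by `Z/Z⁺`, and leave everything else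
unchanged. -/
noncomputable def renorm {V : Type} (T : RTree V) (h : V → ℝ) (D : ℕ) (w ρ : V) : V → ℝ :=
  fun u =>
    if ProperDesc T ρ u then
      if Supported T h D w u then (Ztot T h ρ / Zplus T h D w ρ) * h u else 0
    else h u

/-- `ρ` is the redistribution point for refuting the depth-`D` vertex `w`:
it is the deepest ancestor of `w` having a supported child. -/
def IsRedistPoint {V : Type} (T : RTree V) (h : V → ℝ) (D : ℕ) (w ρ : V) : Prop :=
  AncOrEq T ρ w ∧ (∃ c ∈ T.children ρ, Supported T h D w c) ∧
    ∀ u : V, AncOrEq T u w → T.depth ρ < T.depth u →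
      ∀ c ∈ T.children u, ¬ Supported T h D w c

/-! ### Auxiliary development -/

section Aux

variable {V : Type} (T : RTree V)

lemma depth_eq_zero_iff {v : V} : T.depth v = 0 ↔ v = T.root := by
  constructor
  · intro h
    have := T.ancestor_root v
    rwa [h, Function.iterate_zero_apply] at this
  · rintro rfl; exact T.depth_root

lemma depth_parent_iter {k : ℕ} {v : V} (hk : k ≤ T.depth v) :
    T.depth (T.parent^[k] v) = T.depth v - k := by
  induction k with
  | zero => simp
  | succ n ih =>
    have hn : n ≤ T.depth v := Nat.le_of_succ_le hk
    have hd : T.depth (T.parent^[n] v) = T.depth v - n := ih hn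
    have hne : T.parent^[n] v ≠ T.root := by
      intro hr
      have : T.depth (T.parent^[n] v) = 0 := by rw [hr, T.depth_root]
      omega
    have := T.depth_parent _ hne
    rw [Function.iterate_succ_apply']
    omega

lemma children_finite (v : V) : (T.children v).Finite := by
  apply (T.level_finite (T.depth v + 1)).subset
  rintro u ⟨h1, h2⟩
  have := T.depth_parent u h2
  simp only [Set.mem_setOf_eq]
  rw [← this, h1]

lemma descAt_finite (e : ℕ) (v : V) : (T.descAt e v).Finite := by
  apply (T.level_finite (T.depth v + e)).subset
  rintro u ⟨_, h2⟩
  exact h2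

lemma mem_descAt {e : ℕ} {v u : V} :
    u ∈ T.descAt e v ↔ T.parent^[e] u = v ∧ T.depth u = T.depth v + e :=
  Iff.rfl

lemma descAt_zero (v : V) : T.descAt 0 v = {v} := by
  ext u
  simp only [RTree.descAt, Set.mem_setOf_eq, Function.iterate_zero_apply, Set.mem_singleton_iff]
  constructor
  · rintro ⟨rfl, -⟩; rfl
  · rintro rfl; exact ⟨rfl, by omega⟩

lemma descAt_trans {e f : ℕ} {u x y : V}
    (hx : x ∈ T.descAt e u) (hy : y ∈ T.descAt f x) : y ∈ T.descAt (e + f) u := by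
  obtain ⟨hx1, hx2⟩ := hx
  obtain ⟨hy1, hy2⟩ := hy
  refine ⟨?_, by omega⟩
  rw [Function.iterate_add_apply, hy1, hx1]

lemma descAt_split {e k : ℕ} {u v : V} (hv : v ∈ T.descAt e u) (hk : k ≤ e) :
    v ∈ T.descAt k (T.parent^[k] v) ∧ T.parent^[k] v ∈ T.descAt (e - k) u := by
  obtain ⟨h1, h2⟩ := hv
  have hdk : T.depth (T.parent^[k] v) = T.depth v - k :=
    depth_parent_iter T (by omega)
  refine ⟨⟨rfl, by omega⟩, ⟨?_, by omega⟩⟩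
  rw [← Function.iterate_add_apply, Nat.sub_add_cancel hk, h1]

lemma children_eq_descAt_one (v : V) : T.children v = T.descAt 1 v := by
  ext u
  constructor
  · rintro ⟨h1, h2⟩
    have h3 := T.depth_parent u h2
    rw [h1] at h3
    exact ⟨by simpa using h1, by omega⟩
  · rintro ⟨h1, h2⟩
    have hu : u ≠ T.root := by
      intro hr
      rw [hr, T.depth_root] at h2
      omega
    exact ⟨by simpa using h1, hu⟩

end Aux
section Aux2

variable {V : Type} {T : RTree V}

lemma fsum_eq_finset_sum (f : V → ℝ) {s : Set V} (hs : s.Finite) :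
    ∑ᶠ i ∈ s, f i = ∑ i ∈ hs.toFinset, f i := by
  rw [← finsum_mem_coe_finset]
  exact finsum_mem_congr hs.coe_toFinset.symm (fun _ _ => rfl)

lemma fsum_nonneg {s : Set V} (hs : s.Finite) {f : V → ℝ} (h : ∀ x ∈ s, 0 ≤ f x) :
    0 ≤ ∑ᶠ i ∈ s, f i := by
  rw [fsum_eq_finset_sum f hs]
  exact Finset.sum_nonneg (fun x hx => h x (hs.mem_toFinset.mp hx))

lemma le_fsum {s : Set V} (hs : s.Finite) {f : V → ℝ} (h : ∀ x ∈ s, 0 ≤ f x)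
    {x : V} (hx : x ∈ s) : f x ≤ ∑ᶠ i ∈ s, f i := by
  rw [fsum_eq_finset_sum f hs]
  exact Finset.single_le_sum (fun y hy => h y (hs.mem_toFinset.mp hy)) (hs.mem_toFinset.mpr hx)

lemma fsum_restrict {s t : Set V} (hs : s.Finite) (hts : t ⊆ s) {f : V → ℝ}
    (h0 : ∀ x ∈ s, x ∉ t → f x = 0) : ∑ᶠ i ∈ s, f i = ∑ᶠ i ∈ t, f i := by
  rw [fsum_eq_finset_sum f hs, fsum_eq_finset_sum f (hs.subset hts)]
  apply (Finset.sum_subset _ _).symm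
  · intro x hx
    exact hs.mem_toFinset.mpr (hts ((hs.subset hts).mem_toFinset.mp hx))
  · intro x hx hx'
    exact h0 x (hs.mem_toFinset.mp hx) (fun hxt => hx' ((hs.subset hts).mem_toFinset.mpr hxt))

lemma fsum_mul_left (c : ℝ) (f : V → ℝ) {s : Set V} (hs : s.Finite) :
    ∑ᶠ i ∈ s, c * f i = c * ∑ᶠ i ∈ s, f i := by
  rw [fsum_eq_finset_sum f hs, fsum_eq_finset_sum (fun i => c * f i) hs, Finset.mul_sum]

lemma fsum_congr_on {s : Set V} {f g : V → ℝ} (h : ∀ x ∈ s, f x = g x) :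
    ∑ᶠ i ∈ s, f i = ∑ᶠ i ∈ s, g i :=
  finsum_mem_congr rfl h

lemma descAt_succ (e : ℕ) (u : V) :
    T.descAt (e + 1) u = ⋃ v ∈ T.descAt e u, T.children v := by
  ext x
  simp only [Set.mem_iUnion, exists_prop]
  constructor
  · rintro ⟨h1, h2⟩
    have hx : x ≠ T.root := by
      intro hr
      rw [hr, T.depth_root] at h2
      omega
    have hd := T.depth_parent x hx
    rw [Function.iterate_succ_apply] at h1
    exact ⟨T.parent x, ⟨h1, by omega⟩, rfl, hx⟩
  · rintro ⟨v, ⟨h1, h2⟩, h3, h4⟩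
    have hd := T.depth_parent x h4
    rw [h3] at hd
    refine ⟨?_, by omega⟩
    rw [Function.iterate_succ_apply, h3, h1]

lemma coherent_iter (hcoh : Coherent T h) (e : ℕ) (u : V) :
    h u = ∑ᶠ v ∈ T.descAt e u, h v := by
  induction e with
  | zero => rw [descAt_zero, finsum_mem_singleton]
  | succ n ih =>
    rw [descAt_succ]
    rw [finsum_mem_biUnion]
    · rw [ih]
      exact fsum_congr_on (fun v _ => hcoh.2 v)
    · intro a _ b _ hab
      simp only [Function.onFun, Set.disjoint_left]
      intro c hca hcb
      exact hab (hca.1.symm.trans hcb.1)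
    · exact descAt_finite T n u
    · intro v _
      exact children_finite T v

lemma desc_le (hcoh : Coherent T h) (hnn : ∀ v : V, 0 ≤ h v) {e : ℕ} {u v : V}
    (hv : v ∈ T.descAt e u) : h v ≤ h u := by
  rw [coherent_iter hcoh e u]
  exact le_fsum (descAt_finite T e u) (fun x _ => hnn x) hv

lemma supported_iff (hcoh : Coherent T h) (hnn : ∀ v : V, 0 ≤ h v) {D : ℕ} {w u : V}
    (hu : T.depth u ≤ D) :
    Supported T h D w u ↔ ∃ v ∈ T.descAt (D - T.depth u) u, v ≠ w ∧ 0 < h v := by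
  rw [Supported, if_pos hu]
  constructor
  · rintro ⟨v, hv1, hv2, hv3, hv4⟩
    exact ⟨v, ⟨hv3, by omega⟩, hv2, by simpa using hv4 0 (Nat.zero_le _)⟩
  · rintro ⟨v, hv, hvw, hvpos⟩
    have hd : T.depth v = D := by
      have := hv.2
      omega
    refine ⟨v, hd, hvw, hv.1, ?_⟩
    intro k hk
    have := (descAt_split T hv hk).1
    exact lt_of_lt_of_le hvpos (desc_le hcoh hnn this)

lemma supported_gt_iff {h : V → ℝ} {D : ℕ} {w u : V} (hu : ¬ T.depth u ≤ D) :
    Supported T h D w u ↔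
      T.parent^[T.depth u - D] u ≠ w ∧ 0 < h (T.parent^[T.depth u - D] u) := by
  rw [Supported, if_neg hu]

end Aux2
section Aux3

variable {V : Type} {T : RTree V} {h : V → ℝ} {D : ℕ}

lemma ancOrEq_iff_descAt {u v : V} :
    AncOrEq T u v ↔ ∃ k : ℕ, v ∈ T.descAt k u := Iff.rfl

lemma anc_refl (u : V) : AncOrEq T u u := ⟨0, by simp⟩

lemma anc_trans {a b c : V} (h1 : AncOrEq T a b) (h2 : AncOrEq T b c) :
    AncOrEq T a c := by
  obtain ⟨k, hk⟩ := h1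
  obtain ⟨k', hk'⟩ := h2
  exact ⟨k + k', descAt_trans T hk hk'⟩

lemma anc_of_anc_anc {a b v : V} (ha : AncOrEq T a v) (hb : AncOrEq T b v)
    (hd : T.depth a ≤ T.depth b) : AncOrEq T a b := by
  obtain ⟨k, hk, hdk⟩ := ha
  obtain ⟨k', hk', hdk'⟩ := hb
  have hkk : k' ≤ k := by omega
  refine ⟨k - k', ?_, by omega⟩
  rw [← hk', ← Function.iterate_add_apply, Nat.sub_add_cancel hkk]
  exact hk

lemma anc_eq_of_depth {a b : V} (ha : AncOrEq T a b) (hd : T.depth a = T.depth b) :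
    a = b := by
  obtain ⟨k, hk, hdk⟩ := ha
  have : k = 0 := by omega
  subst this
  simpa using hk.symm

lemma eq_of_anc_anc_depth {a b v : V} (ha : AncOrEq T a v) (hb : AncOrEq T b v)
    (hd : T.depth a = T.depth b) : a = b :=
  anc_eq_of_depth (anc_of_anc_anc ha hb hd.le) hd

lemma pd_iff {ρ u : V} :
    ProperDesc T ρ u ↔ AncOrEq T ρ u ∧ T.depth ρ < T.depth u := by
  constructor
  · rintro ⟨j, hj, h1, h2⟩
    exact ⟨⟨j, h1, h2⟩, by omega⟩
  · rintro ⟨⟨k, h1, h2⟩, hd⟩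
    exact ⟨k, by omega, h1, h2⟩

lemma pd_anc {ρ u : V} (hp : ProperDesc T ρ u) : AncOrEq T ρ u := (pd_iff.mp hp).1

lemma pd_depth_lt {ρ u : V} (hp : ProperDesc T ρ u) : T.depth ρ < T.depth u :=
  (pd_iff.mp hp).2

lemma pd_of_anc_pd {ρ' ρ u : V} (ha : AncOrEq T ρ' ρ) (hp : ProperDesc T ρ u) :
    ProperDesc T ρ' u := by
  rw [pd_iff] at hp ⊢
  refine ⟨anc_trans ha hp.1, ?_⟩
  have h2 := hp.2
  obtain ⟨k, _, hdk⟩ := ha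
  omega

lemma pd_of_anc_ne {ρ u : V} (ha : AncOrEq T ρ u) (hne : ρ ≠ u) :
    ProperDesc T ρ u := by
  rw [pd_iff]
  refine ⟨ha, ?_⟩
  rcases Nat.lt_or_ge (T.depth ρ) (T.depth u) with hlt | hge
  · exact hlt
  · exfalso
    obtain ⟨k, h1, h2⟩ := ha
    exact hne (anc_eq_of_depth ⟨k, h1, h2⟩ (by omega))

lemma child_pd {ρ c : V} (hc : c ∈ T.children ρ) : ProperDesc T ρ c := by
  rw [children_eq_descAt_one] at hc
  exact ⟨1, one_pos, hc.1, hc.2⟩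

lemma anc_comparable {a b v : V} (ha : AncOrEq T a v) (hb : AncOrEq T b v) :
    AncOrEq T a b ∨ AncOrEq T b a := by
  rcases le_or_gt (T.depth a) (T.depth b) with hd | hd
  · exact Or.inl (anc_of_anc_anc ha hb hd)
  · exact Or.inr (anc_of_anc_anc hb ha hd.le)

variable (hcoh : Coherent T h) (hnn : ∀ v : V, 0 ≤ h v)

section Redist

variable {w ρ : V} (hwD : T.depth w = D) (hρ : IsRedistPoint T h D w ρ)

include hwD hρ

lemma redist_depth_lt : T.depth ρ < D := by
  obtain ⟨c, hc, hcs⟩ := hρ.2.1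
  obtain ⟨k, hk, hdk⟩ := hρ.1
  rcases Nat.eq_zero_or_pos k with rfl | hkpos
  · exfalso
    have hρw : ρ = w := by simpa using hk.symm
    have hcd : T.depth c = D + 1 := by
      rw [children_eq_descAt_one] at hc
      have := hc.2
      omega
    have hgt : ¬ T.depth c ≤ D := by omega
    rw [supported_gt_iff hgt] at hcs
    have h1 : T.depth c - D = 1 := by omega
    rw [h1] at hcs
    apply hcs.1
    rw [children_eq_descAt_one] at hc
    simpa [hρw] using hc.1
  · omega

lemma redist_pd_w : ProperDesc T ρ w := by
  apply pd_of_anc_ne hρ.1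
  intro hρw
  have := redist_depth_lt hwD hρ
  rw [hρw, hwD] at this
  omega

omit hwD hρ

lemma child_depth_le {c : V} (hc : c ∈ T.children ρ) (hd : T.depth ρ < D) :
    T.depth c ≤ D := by
  rw [children_eq_descAt_one] at hc
  have := hc.2
  omega

include hcoh hnn hwD hρ

lemma redist_Zplus_pos : 0 < Zplus T h D w ρ := by
  obtain ⟨c, hc, hcs⟩ := hρ.2.1
  have hcd : T.depth c ≤ D := child_depth_le hc (redist_depth_lt hwD hρ)
  obtain ⟨v, hv, -, hvpos⟩ := (supported_iff hcoh hnn hcd).mp hcs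
  have hcpos : 0 < h c := lt_of_lt_of_le hvpos (desc_le hcoh hnn hv)
  have hfin : (T.children ρ ∩ {u : V | Supported T h D w u}).Finite :=
    (children_finite T ρ).inter_of_left _
  calc (0:ℝ) < h c := hcpos
    _ ≤ Zplus T h D w ρ := le_fsum hfin (fun x _ => hnn x) ⟨hc, hcs⟩

lemma redist_Ztot_pos : 0 < Ztot T h ρ := by
  have h1 := redist_Zplus_pos hcoh hnn hwD hρ
  have h2 : Zplus T h D w ρ ≤ Ztot T h ρ := by
    rw [Zplus, Ztot, fsum_eq_finset_sum h ((children_finite T ρ).inter_of_left _),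
      fsum_eq_finset_sum h (children_finite T ρ)]
    apply Finset.sum_le_sum_of_subset_of_nonneg
    · intro x hx
      rw [Set.Finite.mem_toFinset] at hx ⊢
      exact hx.1
    · intro x _ _
      exact hnn x
  linarith

lemma redist_factor_pos : 0 < Ztot T h ρ / Zplus T h D w ρ :=
  div_pos (redist_Ztot_pos hcoh hnn hwD hρ) (redist_Zplus_pos hcoh hnn hwD hρ)

end Redist

lemma renorm_of_not_pd {w ρ u : V} (hu : ¬ ProperDesc T ρ u) :
    renorm T h D w ρ u = h u := if_neg hu

lemma renorm_of_pd_supported {w ρ u : V} (hu : ProperDesc T ρ u)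
    (hs : Supported T h D w u) :
    renorm T h D w ρ u = (Ztot T h ρ / Zplus T h D w ρ) * h u := by
  rw [renorm, if_pos hu, if_pos hs]

lemma renorm_of_pd_not_supported {w ρ u : V} (hu : ProperDesc T ρ u)
    (hs : ¬ Supported T h D w u) : renorm T h D w ρ u = 0 := by
  rw [renorm, if_pos hu, if_neg hs]

end Aux3
/-- Supported avoiding two vertices. -/
def SuppB {V : Type} (T : RTree V) (h : V → ℝ) (D : ℕ) (w₁ w₂ u : V) : Prop :=
  if T.depth u ≤ D then
    ∃ v ∈ T.descAt (D - T.depth u) u, v ≠ w₁ ∧ v ≠ w₂ ∧ 0 < h v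
  else
    T.parent^[T.depth u - D] u ≠ w₁ ∧ T.parent^[T.depth u - D] u ≠ w₂ ∧
      0 < h (T.parent^[T.depth u - D] u)

section Aux4

variable {V : Type} {T : RTree V} {h : V → ℝ} {D : ℕ}

lemma suppB_comm {w₁ w₂ u : V} :
    SuppB T h D w₁ w₂ u ↔ SuppB T h D w₂ w₁ u := by
  rw [SuppB, SuppB]
  split
  · constructor <;> (rintro ⟨v, hv, h1, h2, h3⟩; exact ⟨v, hv, h2, h1, h3⟩)
  · tauto

variable (hcoh : Coherent T h) (hnn : ∀ v : V, 0 ≤ h v)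

include hcoh hnn in
lemma suppB_imp_supported₂ {w₁ w₂ u : V} (hs : SuppB T h D w₁ w₂ u) :
    Supported T h D w₂ u := by
  rw [SuppB] at hs
  by_cases hu : T.depth u ≤ D
  · rw [if_pos hu] at hs
    obtain ⟨v, hv, h1, h2, h3⟩ := hs
    exact (supported_iff hcoh hnn hu).mpr ⟨v, hv, h2, h3⟩
  · rw [if_neg hu] at hs
    rw [supported_gt_iff hu]
    exact ⟨hs.2.1, hs.2.2⟩

include hcoh hnn in
lemma suppB_imp_supported₁ {w₁ w₂ u : V} (hs : SuppB T h D w₁ w₂ u) :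
    Supported T h D w₁ u :=
  suppB_imp_supported₂ hcoh hnn (suppB_comm.mp hs)

lemma suppB_depth_eq {w₁ w₂ a : V} (ha : T.depth a = D) :
    SuppB T h D w₁ w₂ a ↔ a ≠ w₁ ∧ a ≠ w₂ ∧ 0 < h a := by
  rw [SuppB, if_pos ha.le]
  constructor
  · rintro ⟨v, hv, h1, h2, h3⟩
    have he : D - T.depth a = 0 := by omega
    rw [he, descAt_zero] at hv
    rw [Set.mem_singleton_iff] at hv
    subst hv
    exact ⟨h1, h2, h3⟩
  · rintro ⟨h1, h2, h3⟩
    refine ⟨a, ?_, h1, h2, h3⟩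
    have he : D - T.depth a = 0 := by omega
    rw [he, descAt_zero]
    rfl

lemma suppB_deep_anc {w₁ w₂ u : V} (hu : ¬ T.depth u ≤ D)
    (hs : SuppB T h D w₁ w₂ u) :
    SuppB T h D w₁ w₂ (T.parent^[T.depth u - D] u) ∧
      (T.parent^[T.depth u - D] u) ∈ T.descAt 0 (T.parent^[T.depth u - D] u) ∧
      T.depth (T.parent^[T.depth u - D] u) = D ∧
      AncOrEq T (T.parent^[T.depth u - D] u) u := by
  rw [SuppB, if_neg hu] at hs
  have hd : T.depth (T.parent^[T.depth u - D] u) = D := by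
    rw [depth_parent_iter T (by omega)]
    omega
  refine ⟨(suppB_depth_eq hd).mpr hs, ⟨rfl, by omega⟩, hd, ⟨T.depth u - D, rfl, by omega⟩⟩

/-- climbing: a properly-descended `SuppB` vertex yields a `SuppB` child of `ρ`. -/
lemma suppB_climb {w₁ w₂ ρ u : V} (hρd : T.depth ρ < D)
    (hpd : ProperDesc T ρ u) (hs : SuppB T h D w₁ w₂ u) :
    ∃ c ∈ T.children ρ, SuppB T h D w₁ w₂ c := by
  -- first reduce to the case depth u ≤ D
  suffices H : ∀ u, T.depth u ≤ D → ProperDesc T ρ u → SuppB T h D w₁ w₂ u →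
      ∃ c ∈ T.children ρ, SuppB T h D w₁ w₂ c by
    by_cases hu : T.depth u ≤ D
    · exact H u hu hpd hs
    · obtain ⟨hsa, -, hda, hanc⟩ := suppB_deep_anc hu hs
      set a := T.parent^[T.depth u - D] u
      have hpda : ProperDesc T ρ a := by
        rcases anc_comparable (pd_anc hpd) hanc with hh | hh
        · exact pd_of_anc_ne hh (by intro he; rw [he] at hρd; omega)
        · exfalso
          obtain ⟨k, -, hk⟩ := hh
          omega
      exact H a hda.le hpda hsa
  intro u hu hpd hs
  obtain ⟨j, hj, hju, hdu⟩ := hpd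
  refine ⟨T.parent^[j - 1] u, ?_, ?_⟩
  · have hj1 : j = (j - 1) + 1 := by omega
    constructor
    · have h3 : T.parent^[j] u = T.parent (T.parent^[j-1] u) := by
        conv_lhs => rw [hj1]
        exact Function.iterate_succ_apply' _ _ _
      rw [← h3, hju]
    · intro hr
      have : T.depth (T.parent^[j-1] u) = 0 := by rw [hr, T.depth_root]
      rw [depth_parent_iter T (by omega)] at this
      omega
  · have hdc : T.depth (T.parent^[j-1] u) = T.depth ρ + 1 := by
      rw [depth_parent_iter T (by omega)]
      omega
    rw [SuppB, if_pos (by omega : T.depth (T.parent^[j-1] u) ≤ D)]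
    rw [SuppB, if_pos hu] at hs
    obtain ⟨v, hv, h1, h2, h3⟩ := hs
    have humem : u ∈ T.descAt (j - 1) (T.parent^[j-1] u) :=
      (descAt_split T (⟨hju, hdu⟩ : u ∈ T.descAt j ρ) (by omega)).1
    have hvmem := descAt_trans T humem hv
    have hidx : (j - 1) + (D - T.depth u) = D - T.depth (T.parent^[j-1] u) := by omega
    rw [hidx] at hvmem
    exact ⟨v, hvmem, h1, h2, h3⟩

include hcoh hnn in
/-- The key lemma: supportedness w.r.t. `w₂` after renormalizing away `w₁`
is the symmetric notion `SuppB`. -/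
lemma supported_renorm_iff {w₁ w₂ ρ₁ : V} (hw₁D : T.depth w₁ = D)
    (hρ₁ : IsRedistPoint T h D w₁ ρ₁) (u : V) :
    Supported T (renorm T h D w₁ ρ₁) D w₂ u ↔ SuppB T h D w₁ w₂ u := by
  set h₁ := renorm T h D w₁ ρ₁ with hh₁
  have hF := redist_factor_pos hcoh hnn hw₁D hρ₁
  have hd₁ : T.depth ρ₁ < D := redist_depth_lt hw₁D hρ₁
  have hpdw₁ : ProperDesc T ρ₁ w₁ := redist_pd_w hw₁D hρ₁
  have hw₁ns : ¬ Supported T h D w₁ w₁ := by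
    rw [supported_iff hcoh hnn (le_of_eq hw₁D)]
    rintro ⟨v, hv, hvne, -⟩
    have he : D - T.depth w₁ = 0 := by omega
    rw [he, descAt_zero, Set.mem_singleton_iff] at hv
    exact hvne hv
  have h₁w₁ : h₁ w₁ = 0 := renorm_of_pd_not_supported hpdw₁ hw₁ns
  have hposimp : ∀ x, 0 < h₁ x → 0 < h x := by
    intro x hx
    by_cases hpd : ProperDesc T ρ₁ x
    · by_cases hsx : Supported T h D w₁ x
      · rw [hh₁, renorm_of_pd_supported hpd hsx] at hx
        nlinarith [hnn x]
      · rw [hh₁, renorm_of_pd_not_supported hpd hsx] at hx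
        exact absurd hx (lt_irrefl 0)
    · rwa [hh₁, renorm_of_not_pd hpd] at hx
  have hkey : ∀ x, T.depth x ≤ D → ∀ v, v ∈ T.descAt (D - T.depth x) x →
      v ≠ w₁ → 0 < h v → 0 < h₁ x := by
    intro x hx v hvx hvw₁ hv
    have hxpos : 0 < h x := lt_of_lt_of_le hv (desc_le hcoh hnn hvx)
    by_cases hpd : ProperDesc T ρ₁ x
    · have hsx : Supported T h D w₁ x :=
        (supported_iff hcoh hnn hx).mpr ⟨v, hvx, hvw₁, hv⟩
      rw [hh₁, renorm_of_pd_supported hpd hsx]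
      exact mul_pos hF hxpos
    · rwa [hh₁, renorm_of_not_pd hpd]
  by_cases hu : T.depth u ≤ D
  · rw [SuppB, if_pos hu, Supported, if_pos hu]
    constructor
    · rintro ⟨v, hvD, hvw₂, hvch, hvpos⟩
      have h0 := hvpos 0 (Nat.zero_le _)
      rw [Function.iterate_zero_apply] at h0
      have hvw₁ : v ≠ w₁ := by
        rintro rfl
        rw [h₁w₁] at h0
        exact lt_irrefl 0 h0
      exact ⟨v, ⟨hvch, by omega⟩, hvw₁, hvw₂, hposimp v h0⟩
    · rintro ⟨v, hv, hvw₁, hvw₂, hvpos⟩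
      have hv2 := hv.2
      refine ⟨v, by omega, hvw₂, hv.1, ?_⟩
      intro k hk
      obtain ⟨hv1, hv2'⟩ := descAt_split T hv hk
      have hdx : T.depth (T.parent^[k] v) = T.depth u + (D - T.depth u - k) := hv2'.2
      have hidx : D - T.depth (T.parent^[k] v) = k := by omega
      have hv1' : v ∈ T.descAt (D - T.depth (T.parent^[k] v)) (T.parent^[k] v) := by
        rw [hidx]; exact hv1
      exact hkey _ (by omega) v hv1' hvw₁ hvpos
  · rw [SuppB, if_neg hu, Supported, if_neg hu]
    have hda : T.depth (T.parent^[T.depth u - D] u) = D := by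
      rw [depth_parent_iter T (by omega)]
      omega
    constructor
    · rintro ⟨h1, h2⟩
      have haw₁ : T.parent^[T.depth u - D] u ≠ w₁ := by
        intro he
        rw [he, h₁w₁] at h2
        exact lt_irrefl 0 h2
      exact ⟨haw₁, h1, hposimp _ h2⟩
    · rintro ⟨h1, h2, h3⟩
      refine ⟨h2, ?_⟩
      have hmem : T.parent^[T.depth u - D] u ∈
          T.descAt (D - T.depth (T.parent^[T.depth u - D] u)) (T.parent^[T.depth u - D] u) := by
        have he : D - T.depth (T.parent^[T.depth u - D] u) = 0 := by omega
        rw [he, descAt_zero]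
        rfl
      exact hkey _ hda.le _ hmem h1 h3

lemma redist_unique {h' : V → ℝ} {w ρ ρ' : V} (h1 : IsRedistPoint T h' D w ρ)
    (h2 : IsRedistPoint T h' D w ρ') : ρ = ρ' := by
  have hd : T.depth ρ = T.depth ρ' := by
    rcases lt_trichotomy (T.depth ρ) (T.depth ρ') with hlt | heq | hlt
    · obtain ⟨c, hc, hcs⟩ := h2.2.1
      exact absurd hcs (h1.2.2 ρ' h2.1 hlt c hc)
    · exact heq
    · obtain ⟨c, hc, hcs⟩ := h1.2.1
      exact absurd hcs (h2.2.2 ρ h1.1 hlt c hc)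
  exact eq_of_anc_anc_depth h1.1 h2.1 hd

end Aux4
/-- Sum of weights over `SuppB` children. -/
noncomputable def ZSB {V : Type} (T : RTree V) (h : V → ℝ) (D : ℕ) (w₁ w₂ ρ : V) : ℝ :=
  ∑ᶠ c ∈ T.children ρ ∩ {u : V | SuppB T h D w₁ w₂ u}, h c

section Aux5

variable {V : Type} {T : RTree V} {h : V → ℝ} {D : ℕ}

lemma suppB_lift {w₁ w₂ q u : V} (hq : T.depth q ≤ D) (hu : T.depth u ≤ D)
    (hanc : AncOrEq T q u) (hs : SuppB T h D w₁ w₂ u) : SuppB T h D w₁ w₂ q := by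
  rw [SuppB, if_pos hu] at hs
  rw [SuppB, if_pos hq]
  obtain ⟨v, hv, h1, h2, h3⟩ := hs
  obtain ⟨k, hk⟩ := hanc
  have hvq := descAt_trans T hk hv
  have hd1 := hk.2
  have hd2 := hv.2
  have hidx : k + (D - T.depth u) = D - T.depth q := by omega
  rw [hidx] at hvq
  exact ⟨v, hvq, h1, h2, h3⟩

variable (hcoh : Coherent T h) (hnn : ∀ v : V, 0 ≤ h v)

include hcoh hnn in
/-- In a subtree avoiding `w'`, plain supportedness and two-point
supportedness agree. -/
lemma supported_iff_suppB_of_not_anc {w w' ρ : V} (hρd : T.depth ρ < D)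
    (hn : ¬ AncOrEq T ρ w') {u : V} (hu : AncOrEq T ρ u) :
    Supported T h D w u ↔ SuppB T h D w w' u := by
  by_cases hud : T.depth u ≤ D
  · rw [supported_iff hcoh hnn hud, SuppB, if_pos hud]
    constructor
    · rintro ⟨v, hv, h1, h2⟩
      refine ⟨v, hv, h1, ?_, h2⟩
      rintro rfl
      exact hn (anc_trans hu ⟨_, hv⟩)
    · rintro ⟨v, hv, h1, -, h2⟩
      exact ⟨v, hv, h1, h2⟩
  · rw [supported_gt_iff hud, SuppB, if_neg hud]
    have hda : T.depth (T.parent^[T.depth u - D] u) = D := by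
      rw [depth_parent_iter T (by omega)]
      omega
    have hanca : AncOrEq T (T.parent^[T.depth u - D] u) u := ⟨T.depth u - D, rfl, by omega⟩
    have haρ : AncOrEq T ρ (T.parent^[T.depth u - D] u) :=
      anc_of_anc_anc hu hanca (by omega)
    constructor
    · rintro ⟨h1, h2⟩
      refine ⟨h1, ?_, h2⟩
      rintro he
      rw [he] at haρ
      exact hn haρ
    · rintro ⟨h1, -, h2⟩
      exact ⟨h1, h2⟩

include hcoh hnn in
lemma suppB_child_pos {w₁ w₂ ρ c : V} (hρd : T.depth ρ < D) (hc : c ∈ T.children ρ)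
    (hs : SuppB T h D w₁ w₂ c) : 0 < h c := by
  have hcd : T.depth c ≤ D := child_depth_le hc hρd
  rw [SuppB, if_pos hcd] at hs
  obtain ⟨v, hv, -, -, h3⟩ := hs
  exact lt_of_lt_of_le h3 (desc_le hcoh hnn hv)

include hcoh hnn in
lemma ZSB_pos {w₁ w₂ ρ : V} (hρd : T.depth ρ < D)
    (hex : ∃ c ∈ T.children ρ, SuppB T h D w₁ w₂ c) : 0 < ZSB T h D w₁ w₂ ρ := by
  obtain ⟨c, hc, hcs⟩ := hex
  have hfin : (T.children ρ ∩ {u : V | SuppB T h D w₁ w₂ u}).Finite :=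
    (children_finite T ρ).inter_of_left _
  calc (0:ℝ) < h c := suppB_child_pos hcoh hnn hρd hc hcs
    _ ≤ ZSB T h D w₁ w₂ ρ := le_fsum hfin (fun x _ => hnn x) ⟨hc, hcs⟩

/-- Generic computation for sums over children with matched predicates. -/
lemma fsum_children_congr {ρ : V} {p q : V → Prop} {f g : V → ℝ}
    (hpq : ∀ c ∈ T.children ρ, (p c ↔ q c))
    (hfg : ∀ c ∈ T.children ρ, q c → f c = g c) :
    ∑ᶠ c ∈ T.children ρ ∩ {u : V | p u}, f c =
      ∑ᶠ c ∈ T.children ρ ∩ {u : V | q u}, g c := by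
  have hset : T.children ρ ∩ {u : V | p u} = T.children ρ ∩ {u : V | q u} := by
    ext x
    simp only [Set.mem_inter_iff, Set.mem_setOf_eq, and_congr_right_iff]
    exact fun hx => hpq x hx
  rw [hset]
  exact finsum_mem_congr rfl (fun x hx => hfg x hx.1 hx.2)

lemma Ztot_congr {ρ : V} {h' : V → ℝ} (he : ∀ c ∈ T.children ρ, h' c = h c) :
    Ztot T h' ρ = Ztot T h ρ :=
  finsum_mem_congr rfl he

/-- restrict a sum over children to a sub-predicate whose complement vanishes. -/
lemma fsum_children_restrict {ρ : V} {p : V → Prop} {f : V → ℝ}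
    (h0 : ∀ c ∈ T.children ρ, ¬ p c → f c = 0) :
    ∑ᶠ c ∈ T.children ρ, f c = ∑ᶠ c ∈ T.children ρ ∩ {u : V | p u}, f c := by
  apply fsum_restrict (children_finite T ρ) Set.inter_subset_left
  intro x hx hxn
  exact h0 x hx (fun hp => hxn ⟨hx, hp⟩)

lemma fsum_children_inter_mul (c : ℝ) (f : V → ℝ) {ρ : V} (p : Set V) :
    ∑ᶠ x ∈ T.children ρ ∩ p, c * f x = c * ∑ᶠ x ∈ T.children ρ ∩ p, f x :=
  fsum_mul_left c f ((children_finite T ρ).inter_of_left _)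

lemma ZSB_comm {w₁ w₂ ρ : V} : ZSB T h D w₁ w₂ ρ = ZSB T h D w₂ w₁ ρ :=
  fsum_children_congr (fun _ _ => suppB_comm) (fun _ _ _ => rfl)

end Aux5
section Aux6

variable {V : Type} {T : RTree V} {h : V → ℝ} {D : ℕ}

variable (hcoh : Coherent T h) (hnn : ∀ v : V, 0 ≤ h v)

include hcoh hnn in
lemma sideCalc {w₁ w₂ ρ₁ ρ'' : V} (hw₁D : T.depth w₁ = D)
    (hρ₁ : IsRedistPoint T h D w₁ ρ₁)
    (hρ'' : IsRedistPoint T (renorm T h D w₁ ρ₁) D w₂ ρ'')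
    (hanc : AncOrEq T ρ'' ρ₁) (hancw₂ : AncOrEq T ρ₁ w₂) (u : V) :
    renorm T (renorm T h D w₁ ρ₁) D w₂ ρ'' u =
      if ProperDesc T ρ'' u then
        (if SuppB T h D w₁ w₂ u then (h ρ'' / ZSB T h D w₁ w₂ ρ'') * h u else 0)
      else h u := by
  set h₁ := renorm T h D w₁ ρ₁ with hh₁
  have hGrand : ∀ x, Supported T h₁ D w₂ x ↔ SuppB T h D w₁ w₂ x :=
    supported_renorm_iff hcoh hnn hw₁D hρ₁
  have hd₁ : T.depth ρ₁ < D := redist_depth_lt hw₁D hρ₁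
  have hF : 0 < Ztot T h ρ₁ / Zplus T h D w₁ ρ₁ := redist_factor_pos hcoh hnn hw₁D hρ₁
  have hZpne : Zplus T h D w₁ ρ₁ ≠ 0 := ne_of_gt (redist_Zplus_pos hcoh hnn hw₁D hρ₁)
  have hd'' : T.depth ρ'' < D := by
    obtain ⟨k, -, hk⟩ := hanc
    omega
  have hex : ∃ c ∈ T.children ρ'', SuppB T h D w₁ w₂ c := by
    obtain ⟨c, hc, hcs⟩ := hρ''.2.1
    exact ⟨c, hc, (hGrand c).mp hcs⟩
  have hZSB : 0 < ZSB T h D w₁ w₂ ρ'' := ZSB_pos hcoh hnn hd'' hex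
  by_cases hcase : ρ'' = ρ₁
  · subst hcase
    have hZt : Ztot T h₁ ρ'' = h ρ'' := by
      rw [Ztot, fsum_children_restrict (p := fun c => Supported T h D w₁ c)
        (fun c hc hs => renorm_of_pd_not_supported (child_pd hc) hs)]
      rw [finsum_mem_congr rfl
        (fun c (hc : c ∈ T.children ρ'' ∩ {u : V | Supported T h D w₁ u}) =>
          renorm_of_pd_supported (child_pd hc.1) hc.2)]
      rw [fsum_children_inter_mul]
      have : ∑ᶠ x ∈ T.children ρ'' ∩ {u : V | Supported T h D w₁ u}, h x
          = Zplus T h D w₁ ρ'' := rfl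
      rw [this, div_mul_cancel₀ _ hZpne]
      exact (hcoh.2 ρ'').symm
    have hZp : Zplus T h₁ D w₂ ρ'' =
        (Ztot T h ρ'' / Zplus T h D w₁ ρ'') * ZSB T h D w₁ w₂ ρ'' := by
      rw [Zplus, fsum_children_congr (fun c _ => hGrand c)
        (fun c hc hq => renorm_of_pd_supported (child_pd hc)
          (suppB_imp_supported₁ hcoh hnn hq))]
      rw [fsum_children_inter_mul]
      rfl
    by_cases hpd : ProperDesc T ρ'' u
    · rw [if_pos hpd]
      by_cases hsb : SuppB T h D w₁ w₂ u
      · rw [if_pos hsb]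
        have hs₂ : Supported T h₁ D w₂ u := (hGrand u).mpr hsb
        have hs₁ : Supported T h D w₁ u := suppB_imp_supported₁ hcoh hnn hsb
        rw [renorm_of_pd_supported hpd hs₂, hZt, hZp]
        rw [hh₁, renorm_of_pd_supported hpd hs₁]
        have hFne : Ztot T h ρ'' / Zplus T h D w₁ ρ'' ≠ 0 := ne_of_gt hF
        have hZt0 : Ztot T h ρ'' ≠ 0 := ne_of_gt (redist_Ztot_pos hcoh hnn hw₁D hρ₁)
        have hZSB0 : ZSB T h D w₁ w₂ ρ'' ≠ 0 := ne_of_gt hZSB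
        field_simp
      · rw [if_neg hsb,
          renorm_of_pd_not_supported hpd (fun hs => hsb ((hGrand u).mp hs))]
    · rw [if_neg hpd, renorm_of_not_pd hpd, hh₁, renorm_of_not_pd hpd]
  · have hpdρ₁ : ProperDesc T ρ'' ρ₁ := pd_of_anc_ne hanc hcase
    have hdlt : T.depth ρ'' < T.depth ρ₁ := pd_depth_lt hpdρ₁
    have hdisj : ∀ x, ProperDesc T ρ₁ x → ¬ SuppB T h D w₁ w₂ x := by
      intro x hx hsx
      obtain ⟨c, hc, hcs⟩ := suppB_climb hd₁ hx hsx
      exact hρ''.2.2 ρ₁ hancw₂ hdlt c hc ((hGrand c).mpr hcs)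
    have hch : ∀ c ∈ T.children ρ'', h₁ c = h c := by
      intro c hc
      apply renorm_of_not_pd
      intro hpd
      have h1 := pd_depth_lt hpd
      rw [children_eq_descAt_one] at hc
      have h2 := hc.2
      omega
    have hZt : Ztot T h₁ ρ'' = h ρ'' := by
      rw [Ztot_congr hch]
      exact (hcoh.2 ρ'').symm
    have hZp : Zplus T h₁ D w₂ ρ'' = ZSB T h D w₁ w₂ ρ'' := by
      rw [Zplus]
      exact fsum_children_congr (fun c _ => hGrand c) (fun c hc _ => hch c hc)
    by_cases hpd : ProperDesc T ρ'' u
    · rw [if_pos hpd]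
      by_cases hsb : SuppB T h D w₁ w₂ u
      · rw [if_pos hsb, renorm_of_pd_supported hpd ((hGrand u).mpr hsb), hZt, hZp]
        have : h₁ u = h u := renorm_of_not_pd (fun hp => (hdisj u hp) hsb)
        rw [this]
      · rw [if_neg hsb,
          renorm_of_pd_not_supported hpd (fun hs => hsb ((hGrand u).mp hs))]
    · rw [if_neg hpd, renorm_of_not_pd hpd]
      exact renorm_of_not_pd (fun hp => hpd (pd_of_anc_pd hanc hp))

end Aux6
section Aux7

variable {V : Type} {T : RTree V} {h : V → ℝ} {D : ℕ}

variable (hcoh : Coherent T h) (hnn : ∀ v : V, 0 ≤ h v)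

include hcoh hnn in
lemma caseIII {w₁ w₂ ρ₁ ρ₁₂ ρ₂ ρ₂₁ : V}
    (hw₁D : T.depth w₁ = D) (hw₂D : T.depth w₂ = D)
    (hρ₁ : IsRedistPoint T h D w₁ ρ₁)
    (hρ₁₂ : IsRedistPoint T (renorm T h D w₁ ρ₁) D w₂ ρ₁₂)
    (hρ₂ : IsRedistPoint T h D w₂ ρ₂)
    (hρ₂₁ : IsRedistPoint T (renorm T h D w₂ ρ₂) D w₁ ρ₂₁)
    (h12 : AncOrEq T ρ₁ w₂) (h21 : AncOrEq T ρ₂ w₁) :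
    renorm T (renorm T h D w₁ ρ₁) D w₂ ρ₁₂ =
      renorm T (renorm T h D w₂ ρ₂) D w₁ ρ₂₁ := by
  have hG₁ : ∀ x, Supported T (renorm T h D w₁ ρ₁) D w₂ x ↔ SuppB T h D w₁ w₂ x :=
    supported_renorm_iff hcoh hnn hw₁D hρ₁
  have hG₂ : ∀ x, Supported T (renorm T h D w₂ ρ₂) D w₁ x ↔ SuppB T h D w₂ w₁ x :=
    supported_renorm_iff hcoh hnn hw₂D hρ₂
  obtain ⟨c₁, hc₁, hcs₁⟩ := hρ₁₂.2.1
  have hcsb₁ : SuppB T h D w₁ w₂ c₁ := (hG₁ c₁).mp hcs₁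
  obtain ⟨c₂, hc₂, hcs₂⟩ := hρ₂₁.2.1
  have hcsb₂ : SuppB T h D w₂ w₁ c₂ := (hG₂ c₂).mp hcs₂
  -- ρ₁₂ is above ρ₂ and ρ₁
  have hle₂ : T.depth ρ₁₂ ≤ T.depth ρ₂ := by
    by_contra hlt
    exact hρ₂.2.2 ρ₁₂ hρ₁₂.1 (by omega) c₁ hc₁ (suppB_imp_supported₂ hcoh hnn hcsb₁)
  have ha₁₂ρ₂ : AncOrEq T ρ₁₂ ρ₂ := anc_of_anc_anc hρ₁₂.1 hρ₂.1 hle₂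
  have ha₁₂w₁ : AncOrEq T ρ₁₂ w₁ := anc_trans ha₁₂ρ₂ h21
  have hle₁ : T.depth ρ₁₂ ≤ T.depth ρ₁ := by
    by_contra hlt
    exact hρ₁.2.2 ρ₁₂ ha₁₂w₁ (by omega) c₁ hc₁ (suppB_imp_supported₁ hcoh hnn hcsb₁)
  have ha₁₂ρ₁ : AncOrEq T ρ₁₂ ρ₁ := anc_of_anc_anc ha₁₂w₁ hρ₁.1 hle₁
  -- ρ₂₁ is above ρ₁ and ρ₂
  have hle₁' : T.depth ρ₂₁ ≤ T.depth ρ₁ := by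
    by_contra hlt
    exact hρ₁.2.2 ρ₂₁ hρ₂₁.1 (by omega) c₂ hc₂ (suppB_imp_supported₂ hcoh hnn hcsb₂)
  have ha₂₁ρ₁ : AncOrEq T ρ₂₁ ρ₁ := anc_of_anc_anc hρ₂₁.1 hρ₁.1 hle₁'
  have ha₂₁w₂ : AncOrEq T ρ₂₁ w₂ := anc_trans ha₂₁ρ₁ h12
  have hle₂' : T.depth ρ₂₁ ≤ T.depth ρ₂ := by
    by_contra hlt
    exact hρ₂.2.2 ρ₂₁ ha₂₁w₂ (by omega) c₂ hc₂ (suppB_imp_supported₁ hcoh hnn hcsb₂)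
  have ha₂₁ρ₂ : AncOrEq T ρ₂₁ ρ₂ := anc_of_anc_anc ha₂₁w₂ hρ₂.1 hle₂'
  -- ρ₁₂ = ρ₂₁
  have hd1 : T.depth ρ₂₁ ≤ T.depth ρ₁₂ := by
    by_contra hlt
    exact hρ₁₂.2.2 ρ₂₁ ha₂₁w₂ (by omega) c₂ hc₂
      ((hG₁ c₂).mpr (suppB_comm.mp hcsb₂))
  have hd2 : T.depth ρ₁₂ ≤ T.depth ρ₂₁ := by
    by_contra hlt
    exact hρ₂₁.2.2 ρ₁₂ ha₁₂w₁ (by omega) c₁ hc₁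
      ((hG₂ c₁).mpr (suppB_comm.mp hcsb₁))
  have heq : ρ₁₂ = ρ₂₁ :=
    eq_of_anc_anc_depth hρ₁₂.1 ha₂₁w₂ (by omega)
  funext u
  rw [sideCalc hcoh hnn hw₁D hρ₁ hρ₁₂ ha₁₂ρ₁ h12 u,
    sideCalc hcoh hnn hw₂D hρ₂ hρ₂₁ ha₂₁ρ₂ h21 u, ← heq,
    ZSB_comm (w₁ := w₂) (w₂ := w₁),
    show SuppB T h D w₂ w₁ u = SuppB T h D w₁ w₂ u from propext suppB_comm]

end Aux7
section Aux8

variable {V : Type} {T : RTree V} {h : V → ℝ} {D : ℕ}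

variable (hcoh : Coherent T h) (hnn : ∀ v : V, 0 ≤ h v)

include hcoh hnn in
lemma caseI {w₁ w₂ ρ₁ ρ₁₂ ρ₂ ρ₂₁ : V}
    (hw₁D : T.depth w₁ = D) (hw₂D : T.depth w₂ = D)
    (hρ₁ : IsRedistPoint T h D w₁ ρ₁)
    (hρ₁₂ : IsRedistPoint T (renorm T h D w₁ ρ₁) D w₂ ρ₁₂)
    (hρ₂ : IsRedistPoint T h D w₂ ρ₂)
    (hρ₂₁ : IsRedistPoint T (renorm T h D w₂ ρ₂) D w₁ ρ₂₁)
    (hn12 : ¬ AncOrEq T ρ₁ w₂) (hn21 : ¬ AncOrEq T ρ₂ w₁) :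
    renorm T (renorm T h D w₁ ρ₁) D w₂ ρ₁₂ =
      renorm T (renorm T h D w₂ ρ₂) D w₁ ρ₂₁ := by
  set h₁ := renorm T h D w₁ ρ₁ with hh₁
  set h₂ := renorm T h D w₂ ρ₂ with hh₂
  have hG₁ : ∀ x, Supported T h₁ D w₂ x ↔ SuppB T h D w₁ w₂ x :=
    supported_renorm_iff hcoh hnn hw₁D hρ₁
  have hG₂ : ∀ x, Supported T h₂ D w₁ x ↔ SuppB T h D w₂ w₁ x :=
    supported_renorm_iff hcoh hnn hw₂D hρ₂
  have hd₁ : T.depth ρ₁ < D := redist_depth_lt hw₁D hρ₁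
  have hd₂ : T.depth ρ₂ < D := redist_depth_lt hw₂D hρ₂
  have loc₁ : ∀ u, AncOrEq T ρ₁ u → (Supported T h D w₁ u ↔ SuppB T h D w₁ w₂ u) :=
    fun u hu => supported_iff_suppB_of_not_anc hcoh hnn hd₁ hn12 hu
  have loc₂ : ∀ u, AncOrEq T ρ₂ u → (Supported T h D w₂ u ↔ SuppB T h D w₂ w₁ u) :=
    fun u hu => supported_iff_suppB_of_not_anc hcoh hnn hd₂ hn21 hu
  have hnc : ∀ x, ProperDesc T ρ₁ x → ProperDesc T ρ₂ x → False := by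
    intro x h1 h2
    rcases anc_comparable (pd_anc h1) (pd_anc h2) with hh | hh
    · exact hn12 (anc_trans hh hρ₂.1)
    · exact hn21 (anc_trans hh hρ₁.1)
  have he₁₂ : ρ₁₂ = ρ₂ := by
    refine redist_unique hρ₁₂ ⟨hρ₂.1, ?_, ?_⟩
    · obtain ⟨c, hc, hcs⟩ := hρ₂.2.1
      exact ⟨c, hc, (hG₁ c).mpr (suppB_comm.mp ((loc₂ c (pd_anc (child_pd hc))).mp hcs))⟩
    · intro u hu hd c hc hcs
      exact hρ₂.2.2 u hu hd c hc (suppB_imp_supported₂ hcoh hnn ((hG₁ c).mp hcs))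
  have he₂₁ : ρ₂₁ = ρ₁ := by
    refine redist_unique hρ₂₁ ⟨hρ₁.1, ?_, ?_⟩
    · obtain ⟨c, hc, hcs⟩ := hρ₁.2.1
      exact ⟨c, hc, (hG₂ c).mpr (suppB_comm.mp ((loc₁ c (pd_anc (child_pd hc))).mp hcs))⟩
    · intro u hu hd c hc hcs
      exact hρ₁.2.2 u hu hd c hc (suppB_imp_supported₂ hcoh hnn ((hG₂ c).mp hcs))
  have hch₂ : ∀ c ∈ T.children ρ₁, h₂ c = h c :=
    fun c hc => renorm_of_not_pd (fun hp => hnc c (child_pd hc) hp)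
  have hch₁ : ∀ c ∈ T.children ρ₂, h₁ c = h c :=
    fun c hc => renorm_of_not_pd (fun hp => hnc c hp (child_pd hc))
  have hZt₂ : Ztot T h₂ ρ₁ = Ztot T h ρ₁ := Ztot_congr hch₂
  have hZt₁ : Ztot T h₁ ρ₂ = Ztot T h ρ₂ := Ztot_congr hch₁
  have hZp₂ : Zplus T h₂ D w₁ ρ₁ = Zplus T h D w₁ ρ₁ :=
    fsum_children_congr
      (fun c hc => (hG₂ c).trans
        (suppB_comm.trans (loc₁ c (pd_anc (child_pd hc))).symm))
      (fun c hc _ => hch₂ c hc)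
  have hZp₁ : Zplus T h₁ D w₂ ρ₂ = Zplus T h D w₂ ρ₂ :=
    fsum_children_congr
      (fun c hc => (hG₁ c).trans
        (suppB_comm.trans (loc₂ c (pd_anc (child_pd hc))).symm))
      (fun c hc _ => hch₁ c hc)
  funext u
  by_cases hp1 : ProperDesc T ρ₁ u
  · have hp2 : ¬ ProperDesc T ρ₂ u := fun hp => hnc u hp1 hp
    rw [he₁₂, he₂₁, renorm_of_not_pd hp2]
    by_cases hs : Supported T h D w₁ u
    · have hsb : SuppB T h D w₁ w₂ u := (loc₁ u (pd_anc hp1)).mp hs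
      rw [hh₁, renorm_of_pd_supported hp1 hs,
        renorm_of_pd_supported hp1 ((hG₂ u).mpr (suppB_comm.mp hsb)),
        hZt₂, hZp₂, hh₂, renorm_of_not_pd hp2]
    · rw [hh₁, renorm_of_pd_not_supported hp1 hs,
        renorm_of_pd_not_supported hp1
          (fun hss => hs ((loc₁ u (pd_anc hp1)).mpr
            (suppB_comm.mp ((hG₂ u).mp hss))))]
  · by_cases hp2 : ProperDesc T ρ₂ u
    · rw [he₁₂, he₂₁, renorm_of_not_pd hp1]
      by_cases hs : Supported T h D w₂ u
      · have hsb : SuppB T h D w₂ w₁ u := (loc₂ u (pd_anc hp2)).mp hs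
        rw [hh₂, renorm_of_pd_supported hp2 hs,
          renorm_of_pd_supported hp2 ((hG₁ u).mpr (suppB_comm.mp hsb)),
          hZt₁, hZp₁, hh₁, renorm_of_not_pd hp1]
      · rw [hh₂, renorm_of_pd_not_supported hp2 hs,
          renorm_of_pd_not_supported hp2
            (fun hss => hs ((loc₂ u (pd_anc hp2)).mpr
              (suppB_comm.mp ((hG₁ u).mp hss))))]
    · rw [he₁₂, he₂₁, renorm_of_not_pd hp2, renorm_of_not_pd hp1,
        hh₁, hh₂, renorm_of_not_pd hp1, renorm_of_not_pd hp2]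

end Aux8
section Aux9

variable {V : Type} {T : RTree V} {h : V → ℝ} {D : ℕ}

variable (hcoh : Coherent T h) (hnn : ∀ v : V, 0 ≤ h v)

include hcoh hnn in
lemma caseII {w₁ w₂ ρ₁ ρ₁₂ ρ₂ ρ₂₁ : V}
    (hw₁D : T.depth w₁ = D) (hw₂D : T.depth w₂ = D)
    (hρ₁ : IsRedistPoint T h D w₁ ρ₁)
    (hρ₁₂ : IsRedistPoint T (renorm T h D w₁ ρ₁) D w₂ ρ₁₂)
    (hρ₂ : IsRedistPoint T h D w₂ ρ₂)
    (hρ₂₁ : IsRedistPoint T (renorm T h D w₂ ρ₂) D w₁ ρ₂₁)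
    (h12 : AncOrEq T ρ₁ w₂) (hn21 : ¬ AncOrEq T ρ₂ w₁) :
    renorm T (renorm T h D w₁ ρ₁) D w₂ ρ₁₂ =
      renorm T (renorm T h D w₂ ρ₂) D w₁ ρ₂₁ := by
  set h₁ := renorm T h D w₁ ρ₁ with hh₁
  set h₂ := renorm T h D w₂ ρ₂ with hh₂
  have hG₁ : ∀ x, Supported T h₁ D w₂ x ↔ SuppB T h D w₁ w₂ x :=
    supported_renorm_iff hcoh hnn hw₁D hρ₁
  have hG₂ : ∀ x, Supported T h₂ D w₁ x ↔ SuppB T h D w₂ w₁ x :=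
    supported_renorm_iff hcoh hnn hw₂D hρ₂
  have hd₁ : T.depth ρ₁ < D := redist_depth_lt hw₁D hρ₁
  have hd₂ : T.depth ρ₂ < D := redist_depth_lt hw₂D hρ₂
  have loc₂ : ∀ u, AncOrEq T ρ₂ u → (Supported T h D w₂ u ↔ SuppB T h D w₂ w₁ u) :=
    fun u hu => supported_iff_suppB_of_not_anc hcoh hnn hd₂ hn21 hu
  have hpd₁₂ : ProperDesc T ρ₁ ρ₂ := by
    rcases anc_comparable h12 hρ₂.1 with hh | hh
    · apply pd_of_anc_ne hh
      rintro rfl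
      exact hn21 hρ₁.1
    · exact absurd (anc_trans hh hρ₁.1) hn21
  have hdd : T.depth ρ₁ < T.depth ρ₂ := pd_depth_lt hpd₁₂
  have hSBc₂ : ∃ c ∈ T.children ρ₂, SuppB T h D w₁ w₂ c := by
    obtain ⟨c, hc, hcs⟩ := hρ₂.2.1
    exact ⟨c, hc, suppB_comm.mp ((loc₂ c (pd_anc (child_pd hc))).mp hcs)⟩
  have hup : ∀ u, AncOrEq T u ρ₂ → T.depth u ≤ D → SuppB T h D w₁ w₂ u := by
    intro u hu hud
    obtain ⟨c, hc, hcs⟩ := hSBc₂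
    exact suppB_lift hud (child_depth_le hc hd₂)
      (anc_trans hu (pd_anc (child_pd hc))) hcs
  have he₁₂ : ρ₁₂ = ρ₂ := by
    refine redist_unique hρ₁₂ ⟨hρ₂.1, ?_, ?_⟩
    · obtain ⟨c, hc, hcs⟩ := hSBc₂
      exact ⟨c, hc, (hG₁ c).mpr hcs⟩
    · intro u hu hd c hc hcs
      exact hρ₂.2.2 u hu hd c hc (suppB_imp_supported₂ hcoh hnn ((hG₁ c).mp hcs))
  -- the child of ρ₁ towards ρ₂
  obtain ⟨j, hj, hjq, hdj⟩ := hpd₁₂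
  have hqd' : T.depth (T.parent^[j-1] ρ₂) = T.depth ρ₁ + 1 := by
    rw [depth_parent_iter T (by omega)]
    omega
  have hqch : T.parent^[j-1] ρ₂ ∈ T.children ρ₁ := by
    constructor
    · have h3 : T.parent^[j] ρ₂ = T.parent (T.parent^[j-1] ρ₂) := by
        conv_lhs => rw [show j = (j - 1) + 1 by omega]
        exact Function.iterate_succ_apply' _ _ _
      rw [← h3, hjq]
    · intro hr
      rw [hr, T.depth_root] at hqd'
      omega
  have hqanc : AncOrEq T (T.parent^[j-1] ρ₂) ρ₂ := ⟨j - 1, rfl, by omega⟩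
  have hSBq : SuppB T h D w₁ w₂ (T.parent^[j-1] ρ₂) :=
    hup _ hqanc (by omega)
  have he₂₁ : ρ₂₁ = ρ₁ := by
    refine redist_unique hρ₂₁ ⟨hρ₁.1, ?_, ?_⟩
    · exact ⟨_, hqch, (hG₂ _).mpr (suppB_comm.mp hSBq)⟩
    · intro u hu hd c hc hcs
      exact hρ₁.2.2 u hu hd c hc
        (suppB_imp_supported₁ hcoh hnn (suppB_comm.mp ((hG₂ c).mp hcs)))
  -- supportedness transfer off the ρ₂ subtree
  have claim₁ : ∀ u, AncOrEq T ρ₁ u → ¬ ProperDesc T ρ₂ u →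
      (Supported T h D w₁ u ↔ SuppB T h D w₁ w₂ u) := by
    intro u hanc hnpd
    constructor
    · intro hs
      by_cases hud : T.depth u ≤ D
      · obtain ⟨v, hv, hvw₁, hvpos⟩ := (supported_iff hcoh hnn hud).mp hs
        by_cases hvw₂ : v = w₂
        · subst hvw₂
          have huw₂ : AncOrEq T u v := ⟨D - T.depth u, hv.1, hv.2⟩
          rcases anc_comparable huw₂ hρ₂.1 with hh | hh
          · exact hup u hh hud
          · by_cases heq : ρ₂ = u
            · exact hup u (heq ▸ anc_refl ρ₂) hud
            · exact absurd (pd_of_anc_ne hh heq) hnpd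
        · rw [SuppB, if_pos hud]
          exact ⟨v, hv, hvw₁, hvw₂, hvpos⟩
      · rw [supported_gt_iff hud] at hs
        rw [SuppB, if_neg hud]
        refine ⟨hs.1, ?_, hs.2⟩
        intro he
        have hanca : AncOrEq T (T.parent^[T.depth u - D] u) u :=
          ⟨T.depth u - D, rfl, by
            rw [depth_parent_iter T (by omega)]
            omega⟩
        rw [he] at hanca
        apply hnpd
        rw [pd_iff]
        refine ⟨anc_trans hρ₂.1 hanca, by omega⟩
    · exact suppB_imp_supported₁ hcoh hnn
  have hchρ₁ : ∀ c ∈ T.children ρ₁, ¬ ProperDesc T ρ₂ c := by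
    intro c hc hp
    have h1 := pd_depth_lt hp
    rw [children_eq_descAt_one] at hc
    have h2 := hc.2
    omega
  have hchρ₂ : ∀ c ∈ T.children ρ₂, ProperDesc T ρ₁ c :=
    fun c hc => pd_of_anc_pd (pd_anc ⟨j, hj, hjq, hdj⟩) (child_pd hc)
  have hch₂ρ₁ : ∀ c ∈ T.children ρ₁, h₂ c = h c :=
    fun c hc => renorm_of_not_pd (hchρ₁ c hc)
  have hZt₂ : Ztot T h₂ ρ₁ = Ztot T h ρ₁ := Ztot_congr hch₂ρ₁
  have hZp₂ : Zplus T h₂ D w₁ ρ₁ = Zplus T h D w₁ ρ₁ :=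
    fsum_children_congr
      (fun c hc => (hG₂ c).trans (suppB_comm.trans
        (claim₁ c (pd_anc (child_pd hc)) (hchρ₁ c hc)).symm))
      (fun c hc _ => hch₂ρ₁ c hc)
  -- sums at ρ₂
  have hS₁c0 : ∀ c ∈ T.children ρ₂, ¬ Supported T h D w₁ c → h c = 0 := by
    intro c hc hns
    have hcd : T.depth c ≤ D := child_depth_le hc hd₂
    rw [coherent_iter hcoh (D - T.depth c) c,
      fsum_eq_finset_sum h (descAt_finite T _ _)]
    apply Finset.sum_eq_zero
    intro v hv
    rw [Set.Finite.mem_toFinset] at hv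
    by_contra hv0
    have hvpos : 0 < h v := lt_of_le_of_ne (hnn v) (Ne.symm hv0)
    have hvw₁ : v ≠ w₁ := by
      rintro rfl
      exact hn21 (anc_trans (pd_anc (child_pd hc)) ⟨D - T.depth c, hv.1, hv.2⟩)
    exact hns ((supported_iff hcoh hnn hcd).mpr ⟨v, hv, hvw₁, hvpos⟩)
  have hZt₁ρ₂ : Ztot T h₁ ρ₂ =
      (Ztot T h ρ₁ / Zplus T h D w₁ ρ₁) * h ρ₂ := by
    calc Ztot T h₁ ρ₂
        = ∑ᶠ c ∈ T.children ρ₂ ∩ {u : V | Supported T h D w₁ u}, h₁ c :=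
          fsum_children_restrict
            (fun c hc hns => renorm_of_pd_not_supported (hchρ₂ c hc) hns)
      _ = ∑ᶠ c ∈ T.children ρ₂ ∩ {u : V | Supported T h D w₁ u},
            (Ztot T h ρ₁ / Zplus T h D w₁ ρ₁) * h c :=
          finsum_mem_congr rfl
            (fun c hc => renorm_of_pd_supported (hchρ₂ c hc.1) hc.2)
      _ = (Ztot T h ρ₁ / Zplus T h D w₁ ρ₁) *
            ∑ᶠ c ∈ T.children ρ₂ ∩ {u : V | Supported T h D w₁ u}, h c :=
          fsum_children_inter_mul _ _ _
      _ = (Ztot T h ρ₁ / Zplus T h D w₁ ρ₁) * ∑ᶠ c ∈ T.children ρ₂, h c := by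
          rw [← fsum_children_restrict hS₁c0]
      _ = (Ztot T h ρ₁ / Zplus T h D w₁ ρ₁) * h ρ₂ := by
          rw [← hcoh.2 ρ₂]
  have hZp₁ρ₂ : Zplus T h₁ D w₂ ρ₂ =
      (Ztot T h ρ₁ / Zplus T h D w₁ ρ₁) * Zplus T h D w₂ ρ₂ := by
    calc Zplus T h₁ D w₂ ρ₂
        = ∑ᶠ c ∈ T.children ρ₂ ∩ {u : V | Supported T h D w₂ u},
            (Ztot T h ρ₁ / Zplus T h D w₁ ρ₁) * h c :=
          fsum_children_congr
            (fun c hc => (hG₁ c).trans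
              (suppB_comm.trans (loc₂ c (pd_anc (child_pd hc))).symm))
            (fun c hc hq => renorm_of_pd_supported (hchρ₂ c hc)
              (suppB_imp_supported₁ hcoh hnn
                (suppB_comm.mp ((loc₂ c (pd_anc (child_pd hc))).mp hq))))
      _ = (Ztot T h ρ₁ / Zplus T h D w₁ ρ₁) * Zplus T h D w₂ ρ₂ :=
          fsum_children_inter_mul _ _ _
  -- final pointwise computation
  funext u
  by_cases hp2 : ProperDesc T ρ₂ u
  · have hp1 : ProperDesc T ρ₁ u := pd_of_anc_pd (pd_anc ⟨j, hj, hjq, hdj⟩) hp2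
    rw [he₁₂, he₂₁]
    by_cases hsb : SuppB T h D w₁ w₂ u
    · have hs₁ : Supported T h D w₁ u := suppB_imp_supported₁ hcoh hnn hsb
      have hs₂ : Supported T h D w₂ u := suppB_imp_supported₂ hcoh hnn hsb
      rw [renorm_of_pd_supported hp2 ((hG₁ u).mpr hsb),
        renorm_of_pd_supported hp1 ((hG₂ u).mpr (suppB_comm.mp hsb)),
        hZt₂, hZp₂, hh₁, renorm_of_pd_supported hp1 hs₁,
        hh₂, renorm_of_pd_supported hp2 hs₂,
        hZt₁ρ₂, hZp₁ρ₂]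
      have hZt10 : Ztot T h ρ₁ ≠ 0 := ne_of_gt (redist_Ztot_pos hcoh hnn hw₁D hρ₁)
      have hZp10 : Zplus T h D w₁ ρ₁ ≠ 0 := ne_of_gt (redist_Zplus_pos hcoh hnn hw₁D hρ₁)
      have hZp20 : Zplus T h D w₂ ρ₂ ≠ 0 := ne_of_gt (redist_Zplus_pos hcoh hnn hw₂D hρ₂)
      have hZt20 : Ztot T h ρ₂ ≠ 0 := ne_of_gt (redist_Ztot_pos hcoh hnn hw₂D hρ₂)
      have ht2 : Ztot T h ρ₂ = h ρ₂ := (hcoh.2 ρ₂).symm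
      rw [← ht2]
      field_simp
    · rw [renorm_of_pd_not_supported hp2 (fun hs => hsb ((hG₁ u).mp hs)),
        renorm_of_pd_not_supported hp1
          (fun hs => hsb (suppB_comm.mp ((hG₂ u).mp hs)))]
  · by_cases hp1 : ProperDesc T ρ₁ u
    · have hiff := claim₁ u (pd_anc hp1) hp2
      rw [he₁₂, he₂₁, renorm_of_not_pd hp2]
      by_cases hs : Supported T h D w₁ u
      · rw [hh₁, renorm_of_pd_supported hp1 hs,
          renorm_of_pd_supported hp1 ((hG₂ u).mpr (suppB_comm.mp (hiff.mp hs))),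
          hZt₂, hZp₂, hh₂, renorm_of_not_pd hp2]
      · rw [hh₁, renorm_of_pd_not_supported hp1 hs,
          renorm_of_pd_not_supported hp1
            (fun hss => hs (hiff.mpr (suppB_comm.mp ((hG₂ u).mp hss))))]
    · rw [he₁₂, he₂₁, renorm_of_not_pd hp2, renorm_of_not_pd hp1,
        hh₁, hh₂, renorm_of_not_pd hp1, renorm_of_not_pd hp2]

end Aux9
/-- Renormalization operations commute: for two distinct depth-`D` vertices
`w₁` and `w₂` to be refuted, if there is a third depth-`D` vertex `w` with
positive weight distinct from both, then renormalizing with respect to `w₁`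
and then `w₂` (with the respective redistribution points) yields the same
weight function as renormalizing with respect to `w₂` and then `w₁`. -/
theorem stmt6 {V : Type} (T : RTree V) (h : V → ℝ) (D : ℕ)
    (w₁ w₂ w ρ₁ ρ₁₂ ρ₂ ρ₂₁ : V)
    (hcoh : Coherent T h) (hnn : ∀ v : V, 0 ≤ h v)
    (hw₁D : T.depth w₁ = D) (hw₂D : T.depth w₂ = D) (hne : w₁ ≠ w₂)
    (hwD : T.depth w = D) (hne₁ : w ≠ w₁) (hne₂ : w ≠ w₂) (hpos : 0 < h w)
    (hρ₁ : IsRedistPoint T h D w₁ ρ₁)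
    (hρ₁₂ : IsRedistPoint T (renorm T h D w₁ ρ₁) D w₂ ρ₁₂)
    (hρ₂ : IsRedistPoint T h D w₂ ρ₂)
    (hρ₂₁ : IsRedistPoint T (renorm T h D w₂ ρ₂) D w₁ ρ₂₁) :
    renorm T (renorm T h D w₁ ρ₁) D w₂ ρ₁₂ =
      renorm T (renorm T h D w₂ ρ₂) D w₁ ρ₂₁ := by
  by_cases h12 : AncOrEq T ρ₁ w₂
  · by_cases h21 : AncOrEq T ρ₂ w₁
    · exact caseIII hcoh hnn hw₁D hw₂D hρ₁ hρ₁₂ hρ₂ hρ₂₁ h12 h21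
    · exact caseII hcoh hnn hw₁D hw₂D hρ₁ hρ₁₂ hρ₂ hρ₂₁ h12 h21
  · by_cases h21 : AncOrEq T ρ₂ w₁
    · exact (caseII hcoh hnn hw₂D hw₁D hρ₂ hρ₂₁ hρ₁ hρ₁₂ h21 h12).symm
    · exact caseI hcoh hnn hw₁D hw₂D hρ₁ hρ₁₂ hρ₂ hρ₂₁ h12 h21
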